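/- arXiv:1208.6148 — 2 statements merged into one kernel-verified Lean document; each statement's English description precedes it below -/
import Mathlib

section
/- Let F : (0,∞) → ℝ be defined by F(λ) = λ^p for λ ∈ (0,1], where p > 0. Let b : (0,∞) → (0,∞) with b(t) → ∞, and let ε : (0,∞) → (0,1) solve −log F(ε(t))/ε(t) = b(t) for all large t. Then ε(t) → 0 and log F(ε(t)) ∼ −p·log b(t) as t → ∞. -/
open Filter Real

lemma aux_tendsto (c : ℝ) :
    Tendsto (fun y : ℝ => y / (c + Real.log y + y)) atTop (nhds 1) := by
  have h1 : Tendsto (fun y : ℝ => (c + Real.log y + y) / y) atTop (nhds 1) := by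
    have hcongr : (fun y : ℝ => (c + Real.log y + y) / y)
        =ᶠ[atTop] fun y => c / y + Real.log y / y + 1 := by
      filter_upwards [eventually_gt_atTop (0:ℝ)] with y hy
      field_simp
    rw [Filter.tendsto_congr' hcongr]
    have hc : Tendsto (fun y : ℝ => c / y) atTop (nhds 0) :=
      tendsto_const_nhds.div_atTop tendsto_id
    have hlog : Tendsto (fun y : ℝ => Real.log y / y) atTop (nhds 0) :=
      Real.isLittleO_log_id_atTop.tendsto_div_nhds_zero
    have := (hc.add hlog).add (tendsto_const_nhds (x := (1:ℝ)) (f := atTop))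
    simpa using this
  have h2 := h1.inv₀ one_ne_zero
  simp only [inv_one] at h2
  refine h2.congr fun y => ?_
  rw [inv_div]

/-- If F(λ) = λ^p on (0,1], b(t) → ∞, and ε(t) ∈ (0,1) solves
−log F(ε(t))/ε(t) = b(t), then ε(t) → 0 and log F(ε(t)) ∼ −p·log b(t). -/
theorem power_law_epsilon_asymptotics
    (p : ℝ) (hp : 0 < p)
    (b eps : ℝ → ℝ)
    (hb : Tendsto b atTop atTop)
    (hbpos : ∀ t > (0:ℝ), 0 < b t)
    (heq : ∀ᶠ t in atTop, eps t ∈ Set.Ioo (0:ℝ) 1 ∧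
      -Real.log ((eps t) ^ p) / eps t = b t) :
    Tendsto eps atTop (nhds 0) ∧
    Tendsto (fun t => Real.log ((eps t) ^ p) / (-(p * Real.log (b t))))
      atTop (nhds 1) := by
  -- key reformulation: b t = p * (-log (eps t)) / eps t
  have heq' : ∀ᶠ t in atTop, eps t ∈ Set.Ioo (0:ℝ) 1 ∧
      b t = p * (-Real.log (eps t)) / eps t := by
    filter_upwards [heq] with t ⟨hmem, hbt⟩
    refine ⟨hmem, ?_⟩
    rw [← hbt, Real.log_rpow hmem.1]
    ring
  -- eps → 0
  have h0 : Tendsto eps atTop (nhds 0) := by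
    rw [NormedAddCommGroup.tendsto_nhds_zero]
    intro ε hε
    set δ : ℝ := min ε (1/2) with hδdef
    have hδ0 : 0 < δ := lt_min hε (by norm_num)
    have hδ1 : δ < 1 := lt_of_le_of_lt (min_le_right _ _) (by norm_num)
    have hblarge : ∀ᶠ t in atTop, p * (-Real.log δ) / δ < b t :=
      hb.eventually_gt_atTop _
    filter_upwards [heq', hblarge] with t ⟨hmem, hbt⟩ hbig
    have heps_lt : eps t < δ := by
      by_contra hcon
      push_neg at hcon
      have hlogδ : 0 ≤ -Real.log δ := by
        have := Real.log_nonpos hδ0.le hδ1.le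
        linarith
      have hlog_le : -Real.log (eps t) ≤ -Real.log δ :=
        neg_le_neg (Real.log_le_log hδ0 hcon)
      have : b t ≤ p * (-Real.log δ) / δ := by
        rw [hbt]
        apply div_le_div₀ (by positivity) _ hδ0 hcon
        exact mul_le_mul_of_nonneg_left hlog_le hp.le
      linarith
    rw [Real.norm_eq_abs, abs_of_pos hmem.1]
    exact lt_of_lt_of_le heps_lt (min_le_left _ _)
  refine ⟨h0, ?_⟩
  -- L t = -log (eps t) → ∞
  have heps_pos : ∀ᶠ t in atTop, 0 < eps t := by
    filter_upwards [heq'] with t ht; exact ht.1.1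
  have hlog_bot : Tendsto (fun t => Real.log (eps t)) atTop atBot :=
    Real.tendsto_log_nhdsGT_zero.comp
      (tendsto_nhdsWithin_iff.mpr ⟨h0, heps_pos⟩)
  have hL : Tendsto (fun t => -Real.log (eps t)) atTop atTop :=
    tendsto_neg_atBot_atTop.comp hlog_bot
  -- composed limit
  have hcomp := (aux_tendsto (Real.log p)).comp hL
  refine hcomp.congr' ?_
  have hL1 : ∀ᶠ t in atTop, 1 < -Real.log (eps t) := hL.eventually_gt_atTop 1
  filter_upwards [heq', hL1] with t ⟨hmem, hbt⟩ hLt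
  have hepos := hmem.1
  have hLpos : 0 < -Real.log (eps t) := lt_trans one_pos hLt
  have hlogb : Real.log (b t) =
      Real.log p + Real.log (-Real.log (eps t)) + (-Real.log (eps t)) := by
    rw [hbt, Real.log_div (by positivity) hepos.ne', Real.log_mul hp.ne' hLpos.ne']
    ring
  have hlogF : Real.log ((eps t) ^ p) = p * Real.log (eps t) :=
    Real.log_rpow hepos p
  simp only [Function.comp]
  rw [← hlogb, hlogF]
  have hy : -(p * Real.log (b t)) = p * (-(Real.log (b t))) := by ring
  rw [hy, mul_div_mul_left _ _ hp.ne', div_neg, ← neg_div]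
end

section
/- Let F(λ) = (−log λ)^{−p} for λ ∈ (0, e^{−1}], where p > 0. Let b : (0,∞) → (0,∞) with b(t) → ∞, and let ε : (0,∞) → (0, e^{−1}) solve −log F(ε(t))/ε(t) = b(t) for all large t. Then log F(ε(t)) ∼ −p·log log b(t) as t → ∞. -/
open Filter Real

/-- If F(λ) = (−log λ)^(−p) on (0, e⁻¹], b(t) → ∞, and ε(t) ∈ (0, e⁻¹) solves
−log F(ε(t))/ε(t) = b(t), then log F(ε(t)) ∼ −p·log log b(t). -/
theorem log_law_epsilon_asymptotics
    (p : ℝ) (hp : 0 < p)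
    (b eps : ℝ → ℝ)
    (hb : Tendsto b atTop atTop)
    (hbpos : ∀ t > (0:ℝ), 0 < b t)
    (heq : ∀ᶠ t in atTop, eps t ∈ Set.Ioo (0:ℝ) (Real.exp (-1)) ∧
      -Real.log ((-Real.log (eps t)) ^ (-p)) / eps t = b t) :
    Tendsto (fun t =>
        Real.log ((-Real.log (eps t)) ^ (-p)) / (-(p * Real.log (Real.log (b t)))))
      atTop (nhds 1) := by
  set L : ℝ → ℝ := fun t => Real.log (-Real.log (eps t)) with hLdef
  -- basic eventual facts
  have hev : ∀ᶠ t in atTop, 0 < L t ∧ b t = p * L t * Real.exp (Real.exp (L t)) ∧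
      Real.log ((-Real.log (eps t)) ^ (-p)) = -p * L t := by
    filter_upwards [heq] with t ht
    obtain ⟨⟨h0, h1⟩, heqt⟩ := ht
    have hlog : Real.log (eps t) < -1 := by
      have := Real.log_lt_log h0 h1
      simpa [Real.log_exp] using this
    have hpos : (1:ℝ) < -Real.log (eps t) := by linarith
    have hposL : 0 < L t := Real.log_pos hpos
    have hrpow : Real.log ((-Real.log (eps t)) ^ (-p)) = -p * L t :=
      Real.log_rpow (by linarith) _
    refine ⟨hposL, ?_, hrpow⟩
    have h2 : p * L t / eps t = b t := by
      rw [hrpow] at heqt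
      simpa [neg_mul, neg_neg] using heqt
    have hexp : Real.exp (L t) = -Real.log (eps t) := Real.exp_log (by linarith)
    have heps : eps t = Real.exp (-Real.exp (L t)) := by
      rw [hexp, neg_neg, Real.exp_log h0]
    rw [← h2, heps, Real.exp_neg, div_eq_mul_inv, inv_inv]
  -- L tends to infinity
  have hLtop : Tendsto L atTop atTop := by
    have hlow : ∀ᶠ t in atTop, Real.log (Real.log (b t / p) / 2) ≤ L t := by
      filter_upwards [hev, hb.eventually_gt_atTop (p * Real.exp 2)] with t ⟨hposL, hbt, _⟩ hbig
      have hLe : L t ≤ Real.exp (L t) := by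
        have := Real.add_one_le_exp (L t); linarith
      have hble : b t ≤ p * Real.exp (2 * Real.exp (L t)) := by
        rw [hbt]
        have h1 : p * L t * Real.exp (Real.exp (L t)) ≤
            p * Real.exp (L t) * Real.exp (Real.exp (L t)) := by
          have hE : (0:ℝ) ≤ Real.exp (Real.exp (L t)) := (Real.exp_pos _).le
          nlinarith [mul_nonneg (mul_nonneg hp.le (sub_nonneg.mpr hLe)) hE]
        have h2 : Real.exp (L t) * Real.exp (Real.exp (L t)) =
            Real.exp (L t + Real.exp (L t)) := (Real.exp_add _ _).symm
        have h3 : Real.exp (L t + Real.exp (L t)) ≤ Real.exp (2 * Real.exp (L t)) :=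
          Real.exp_le_exp.mpr (by linarith)
        calc p * L t * Real.exp (Real.exp (L t)) ≤
            p * Real.exp (L t) * Real.exp (Real.exp (L t)) := h1
          _ = p * Real.exp (L t + Real.exp (L t)) := by rw [mul_assoc, h2]
          _ ≤ p * Real.exp (2 * Real.exp (L t)) := by nlinarith [Real.exp_pos (L t)]
      have hbp : Real.exp 2 < b t / p := by
        rw [lt_div_iff₀ hp]; linarith
      have hlogb : Real.log (b t / p) ≤ 2 * Real.exp (L t) := by
        have h4 : b t / p ≤ Real.exp (2 * Real.exp (L t)) := by
          rw [div_le_iff₀ hp]; linarith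
        have hb0 : 0 < b t := lt_trans (by positivity) hbig
        calc Real.log (b t / p) ≤ Real.log (Real.exp (2 * Real.exp (L t))) :=
            Real.log_le_log (div_pos hb0 hp) h4
          _ = 2 * Real.exp (L t) := Real.log_exp _
      have hpos2 : 0 < Real.log (b t / p) / 2 := by
        have : (2:ℝ) < Real.log (b t / p) := by
          have := Real.log_lt_log (Real.exp_pos 2) hbp
          simpa [Real.log_exp] using this
        linarith
      calc Real.log (Real.log (b t / p) / 2) ≤ Real.log (Real.exp (L t)) :=
          Real.log_le_log hpos2 (by linarith)
        _ = L t := Real.log_exp _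
    refine tendsto_atTop_mono' _ hlow ?_
    have h1 : Tendsto (fun t => b t / p) atTop atTop := hb.atTop_div_const hp
    have h2 : Tendsto (fun t => Real.log (b t / p)) atTop atTop :=
      Real.tendsto_log_atTop.comp h1
    have h3 : Tendsto (fun t => Real.log (b t / p) / 2) atTop atTop :=
      h2.atTop_div_const two_pos
    exact Real.tendsto_log_atTop.comp h3
  -- the remainder term
  set r : ℝ → ℝ := fun t => (Real.log p + Real.log (L t)) / Real.exp (L t) with hrdef
  have hraux : Tendsto (fun x : ℝ => (Real.log p + Real.log x) / Real.exp x) atTop (nhds 0) := by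
    have h1 : Tendsto (fun x : ℝ => Real.log p / Real.exp x) atTop (nhds 0) :=
      Tendsto.div_atTop tendsto_const_nhds Real.tendsto_exp_atTop
    have h2 : Tendsto (fun x : ℝ => Real.log x / Real.exp x) atTop (nhds 0) := by
      have hxe : Tendsto (fun x : ℝ => x / Real.exp x) atTop (nhds 0) := by
        have := Real.tendsto_pow_mul_exp_neg_atTop_nhds_zero 1
        simpa [pow_one, Real.exp_neg, div_eq_mul_inv] using this
      refine squeeze_zero' ?_ ?_ hxe
      · filter_upwards [eventually_ge_atTop (1:ℝ)] with x hx
        have := Real.log_nonneg hx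
        positivity
      · filter_upwards [eventually_ge_atTop (1:ℝ)] with x hx
        have hlx : Real.log x ≤ x := Real.log_le_sub_one_of_pos (by linarith) |>.trans (by linarith)
        gcongr
    have := h1.add h2
    simpa [add_div] using this
  have hr0 : Tendsto r atTop (nhds 0) := hraux.comp hLtop
  have hc0 : Tendsto (fun t => Real.log (1 + r t)) atTop (nhds 0) := by
    have h1 : Tendsto (fun t => 1 + r t) atTop (nhds (1 + 0)) :=
      tendsto_const_nhds.add hr0
    have h2 : ContinuousAt Real.log 1 := Real.continuousAt_log (by norm_num)
    have := h2.tendsto.comp (by simpa using h1)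
    simpa [Function.comp_def] using this
  -- key identity for log log b
  have hkey : ∀ᶠ t in atTop,
      Real.log (Real.log (b t)) = L t + Real.log (1 + r t) := by
    filter_upwards [hev, hr0.eventually (eventually_gt_nhds (by norm_num : (-2⁻¹:ℝ) < 0))]
      with t ⟨hposL, hbt, _⟩ hrgt
    have he : Real.exp (L t) ≠ 0 := Real.exp_ne_zero _
    have hlogb : Real.log (b t) = Real.log p + Real.log (L t) + Real.exp (L t) := by
      rw [hbt, Real.log_mul (by positivity) (Real.exp_ne_zero _),
        Real.log_mul (ne_of_gt hp) (ne_of_gt hposL), Real.log_exp]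
    have hfac : Real.log (b t) = Real.exp (L t) * (1 + r t) := by
      rw [hlogb, hrdef]
      field_simp
      ring
    rw [hfac, Real.log_mul he (by linarith : (1:ℝ) + r t ≠ 0), Real.log_exp]
  -- the ratio log log b / L tends to 1
  have hmain : Tendsto (fun t => Real.log (Real.log (b t)) / L t) atTop (nhds 1) := by
    have h1 : Tendsto (fun t => Real.log (1 + r t) / L t) atTop (nhds 0) :=
      Tendsto.div_atTop hc0 hLtop
    have h2 : Tendsto (fun t => 1 + Real.log (1 + r t) / L t) atTop (nhds (1 + 0)) :=
      tendsto_const_nhds.add h1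
    refine Tendsto.congr' ?_ (by simpa using h2)
    filter_upwards [hkey, hev] with t hk ⟨hposL, _, _⟩
    rw [hk, add_div, div_self (ne_of_gt hposL)]
  have hinv : Tendsto (fun t => (Real.log (Real.log (b t)) / L t)⁻¹) atTop (nhds 1) := by
    have := hmain.inv₀ one_ne_zero
    simpa using this
  refine Tendsto.congr' ?_ hinv
  filter_upwards [hev] with t ⟨hposL, _, hrpow⟩
  rw [inv_div, hrpow]
  rw [show -p * L t = -(p * L t) by ring, neg_div_neg_eq, mul_div_mul_left _ _ (ne_of_gt hp)]
end
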